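/- For every k > 0, the quantity 1 − 3·coth(k)/k + 3/k² is strictly positive and strictly less than 1. -/
import Mathlib


/-- Hyperbolic cotangent. -/
noncomputable def coth (k : ℝ) : ℝ := Real.cosh k / Real.sinh k

lemma sinh_lt_mul_cosh {k : ℝ} (hk : 0 < k) : Real.sinh k < k * Real.cosh k := by
  have hmono : StrictMonoOn (fun x => x * Real.cosh x - Real.sinh x) (Set.Ici 0) := by
    apply strictMonoOn_of_deriv_pos (convex_Ici 0)
    · fun_prop
    · intro x hx
      rw [interior_Ici] at hx
      have hd : HasDerivAt (fun x => x * Real.cosh x - Real.sinh x)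
          (1 * Real.cosh x + x * Real.sinh x - Real.cosh x) x :=
        ((hasDerivAt_id x).mul (Real.hasDerivAt_cosh x)).sub (Real.hasDerivAt_sinh x)
      rw [hd.deriv]
      have h0 := Real.sinh_pos_iff.2 hx
      have hx' : (0:ℝ) < x := hx
      nlinarith
  have h := hmono (Set.self_mem_Ici) (Set.mem_Ici.2 hk.le) hk
  simp at h
  linarith

lemma key_ineq {k : ℝ} (hk : 0 < k) : 3 * k * Real.cosh k < (k ^ 2 + 3) * Real.sinh k := by
  have hmono : StrictMonoOn (fun x => (x ^ 2 + 3) * Real.sinh x - 3 * x * Real.cosh x)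
      (Set.Ici 0) := by
    apply strictMonoOn_of_deriv_pos (convex_Ici 0)
    · fun_prop
    · intro x hx
      rw [interior_Ici] at hx
      have hd : HasDerivAt (fun x => (x ^ 2 + 3) * Real.sinh x - 3 * x * Real.cosh x)
          (x * (x * Real.cosh x - Real.sinh x)) x := by
        have : HasDerivAt (fun x => (x ^ 2 + 3) * Real.sinh x - 3 * x * Real.cosh x)
            (((2:ℕ) * x ^ (2-1)) * Real.sinh x + (x ^ 2 + 3) * Real.cosh x -
              ((0 * x + 3 * 1) * Real.cosh x + 3 * x * Real.sinh x)) x :=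
          (((hasDerivAt_pow 2 x).add_const 3).mul (Real.hasDerivAt_sinh x)).sub
            (((hasDerivAt_const x 3).mul (hasDerivAt_id x)).mul (Real.hasDerivAt_cosh x))
        convert this using 1
        push_cast
        ring
      rw [hd.deriv]
      have h1 := sinh_lt_mul_cosh hx
      have hx' : (0:ℝ) < x := hx
      nlinarith
  have h := hmono (Set.self_mem_Ici) (Set.mem_Ici.2 hk.le) hk
  simp at h
  nlinarith

/-- For every `k > 0`, the anisotropy weight `1 − 3 coth k / k + 3/k²` lies strictly
between `0` and `1`. -/
theorem anisotropy_weight_bounds (k : ℝ) (hk : 0 < k) :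
    0 < 1 - 3 * coth k / k + 3 / k ^ 2 ∧
    1 - 3 * coth k / k + 3 / k ^ 2 < 1 := by
  have hs : 0 < Real.sinh k := Real.sinh_pos_iff.2 hk
  have h1 := sinh_lt_mul_cosh hk
  have h2 := key_ineq hk
  have hkne : k ≠ 0 := hk.ne'
  have hsne : Real.sinh k ≠ 0 := hs.ne'
  constructor
  · have : (1 : ℝ) - 3 * coth k / k + 3 / k ^ 2 =
        ((k ^ 2 + 3) * Real.sinh k - 3 * k * Real.cosh k) / (k ^ 2 * Real.sinh k) := by
      rw [coth]; field_simp; ring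
    rw [this]
    apply div_pos (by linarith) (by positivity)
  · have : (1 : ℝ) - 3 * coth k / k + 3 / k ^ 2 - 1 =
        (3 * (Real.sinh k - k * Real.cosh k)) / (k ^ 2 * Real.sinh k) := by
      rw [coth]; field_simp; ring
    have hneg : (1 : ℝ) - 3 * coth k / k + 3 / k ^ 2 - 1 < 0 := by
      rw [this]
      apply div_neg_of_neg_of_pos (by linarith) (by positivity)
    linarith
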